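/- Let (X,d) be a metric space with infinitely remote point ω, let o ∈ X, r > 0, and let φ : X → X be a bijective Möbius map (preserving cross-ratio triples) such that φ(ω) = o, φ(o) = ω, and φ(y) = y for all y on the sphere S = {y : d(o,y) = r}. Assume S is nonempty. Then for every x ∈ X distinct from o and ω, d(o,x) · d(o,φ(x)) = r². -/
import Mathlib


/-- Projective equality of triples of reals, i.e. equality in `ℝP²`. -/
def ProjEq (a b : ℝ × ℝ × ℝ) : Prop :=
  ∃ c : ℝ, 0 < c ∧ b.1 = c * a.1 ∧ b.2.1 = c * a.2.1 ∧ b.2.2 = c * a.2.2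

/-- A quadruple is admissible if no entry occurs three or four times. -/
def Admissible {X : Type*} (x y z u : X) : Prop :=
  ¬ ((x = y ∧ y = z) ∨ (x = y ∧ y = u) ∨ (x = z ∧ z = u) ∨ (y = z ∧ z = u))

open scoped Classical in
/-- The cross-ratio triple of a quadruple with respect to an extended metric `d` with
infinitely remote point `ω`, with the standard conventions when `ω` occurs among the
entries: e.g. `crt(x,y,z,ω) = (d(x,y) : d(x,z) : d(y,z))` and `crt(x,y,ω,ω) = (0:1:1)`. -/
noncomputable def crt {X : Type*} (d : X → X → ℝ) (ω x y z u : X) : ℝ × ℝ × ℝ :=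
  if x = ω then
    (if y = ω then ((0 : ℝ), 1, 1) else if z = ω then ((1 : ℝ), 0, 1)
      else if u = ω then ((1 : ℝ), 1, 0) else (d z u, d y u, d y z))
  else if y = ω then
    (if z = ω then ((1 : ℝ), 1, 0) else if u = ω then ((1 : ℝ), 0, 1)
      else (d z u, d x z, d x u))
  else if z = ω then
    (if u = ω then ((0 : ℝ), 1, 1) else (d x y, d y u, d x u))
  else if u = ω then (d x y, d x z, d y z)
  else (d x y * d z u, d x z * d y u, d x u * d y z)


/-- a bijective Möbius map `φ` swapping `o` and the infinitely remote point
`ω` and fixing the nonempty sphere `S = {y | d(o,y) = r}` pointwise satisfies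
`d(o,x)·d(o,φ(x)) = r²` for every `x ∉ {o, ω}`. -/
theorem strong_inversion_radius_identity
    {X : Type*} (ω o : X) (hoω : o ≠ ω) (d : X → X → ℝ) (r : ℝ) (hr : 0 < r)
    (hd_self : ∀ x, d x x = 0)
    (hd_comm : ∀ x y, x ≠ ω → y ≠ ω → d x y = d y x)
    (hd_pos : ∀ x y, x ≠ ω → y ≠ ω → x ≠ y → 0 < d x y)
    (hd_tri : ∀ x y z, x ≠ ω → y ≠ ω → z ≠ ω → d x z ≤ d x y + d y z)
    (φ : X → X) (hbij : Function.Bijective φ)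
    (hmob : ∀ x y z u : X, Admissible x y z u →
      ProjEq (crt d ω x y z u) (crt d ω (φ x) (φ y) (φ z) (φ u)))
    (hφω : φ ω = o) (hφo : φ o = ω)
    (hfix : ∀ y, y ≠ ω → d o y = r → φ y = y)
    (hS : ∃ y, y ≠ ω ∧ d o y = r) :
    ∀ x, x ≠ o → x ≠ ω → d o x * d o (φ x) = r ^ 2 := by

  intro x hxo hxω
  obtain ⟨y, hyω, hyr⟩ := hS
  have hoy : o ≠ y := by
    intro h; rw [← h, hd_self] at hyr; exact absurd hyr hr.ne
  have hφy : φ y = y := hfix y hyω hyr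
  have hadm : Admissible o x y ω := by
    rintro (⟨h1, h2⟩ | ⟨h1, h2⟩ | ⟨h1, h2⟩ | ⟨h1, h2⟩)
    · exact hxo h1.symm
    · exact hxω h2
    · exact hyω h2
    · exact hyω h2
  have hφxω : φ x ≠ ω := by
    intro h; exact hxo (hbij.injective (h.trans hφo.symm))
  obtain ⟨c, hc, h1, h2, h3⟩ := hmob o x y ω hadm
  rw [hφo, hφy, hφω] at h1 h2 h3
  simp only [crt, if_pos rfl, if_neg hoω, if_neg hxω, if_neg hyω, if_neg hφxω] at h1 h2
  -- h1 : d y o = c * d o x,  h2 : d (φ x) o = c * d o y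
  have hdox : 0 < d o x := hd_pos o x hoω hxω (fun h => hxo h.symm)
  have e1 : r = c * d o x := by
    rw [← hyr, hd_comm o y hoω hyω]; exact h1
  have e2 : d o (φ x) = c * r := by
    rw [hd_comm o (φ x) hoω hφxω, ← hyr]; exact h2
  rw [e2]
  calc d o x * (c * r) = (c * d o x) * r := by ring
    _ = r ^ 2 := by rw [← e1]; ring
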